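/- The free product Z/2Z * Z/3Z is isomorphic to PSL₂(Z). -/

import Mathlib

open Matrix ModularGroup Subgroup
open scoped MatrixGroups Pointwise

noncomputable section
namespace Stmt4

/-! ### Generation of `SL(2,ℤ)` by `S` and `T` -/

private lemma S_sq : (S : SL(2,ℤ)) ^ 2 = -1 := by
  ext i j
  rw [pow_two]
  fin_cases i <;> fin_cases j <;>
    simp [Matrix.SpecialLinearGroup.coe_mul, coe_S, Matrix.mul_apply, Fin.sum_univ_two]

private lemma coe_U : ((S * T : SL(2,ℤ)) : Matrix (Fin 2) (Fin 2) ℤ) = !![0, -1; 1, 1] := by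
  ext i j
  fin_cases i <;> fin_cases j <;>
    simp [Matrix.SpecialLinearGroup.coe_mul, coe_S, coe_T, Matrix.mul_apply, Fin.sum_univ_two]

private lemma coe_U_sq :
    (((S * T) ^ 2 : SL(2,ℤ)) : Matrix (Fin 2) (Fin 2) ℤ) = !![-1, -1; 1, 0] := by
  rw [pow_two, Matrix.SpecialLinearGroup.coe_mul, coe_U]
  ext i j
  fin_cases i <;> fin_cases j <;> simp [Matrix.mul_apply, Fin.sum_univ_two]

private lemma U_cube : ((S * T : SL(2,ℤ))) ^ 3 = -1 := by
  rw [pow_succ]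
  ext i j
  rw [Matrix.SpecialLinearGroup.coe_mul, coe_U_sq, coe_U]
  fin_cases i <;> fin_cases j <;> simp [Matrix.mul_apply, Fin.sum_univ_two]

private lemma gen_aux : ∀ n : ℕ, ∀ A : SL(2, ℤ), (A.1 1 0).natAbs = n →
    A ∈ Subgroup.closure ({S, T} : Set SL(2, ℤ)) := by
  intro n
  induction n using Nat.strong_induction_on with
  | _ n ih =>
    intro A hn
    have hS : S ∈ Subgroup.closure ({S, T} : Set SL(2, ℤ)) := subset_closure (by simp)
    have hT : T ∈ Subgroup.closure ({S, T} : Set SL(2, ℤ)) := subset_closure (by simp)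
    rcases eq_or_ne (A.1 1 0) 0 with hc | hc
    · have hdet := A.2
      rw [Matrix.det_fin_two] at hdet
      rw [hc, mul_zero, sub_zero] at hdet
      rcases Int.mul_eq_one_iff_eq_one_or_neg_one.mp hdet with ⟨ha, hd⟩ | ⟨ha, hd⟩
      · have : A = T ^ (A.1 0 1) := by
          ext i j
          rw [coe_T_zpow]
          fin_cases i <;> fin_cases j <;> simp [ha, hd, hc]
        rw [this]
        exact zpow_mem hT _
      · have : A = S ^ 2 * T ^ (-(A.1 0 1)) := by
          ext i j
          rw [Matrix.SpecialLinearGroup.coe_mul, S_sq, coe_T_zpow]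
          fin_cases i <;> fin_cases j <;>
            simp [ha, hd, hc, Matrix.mul_apply, Fin.sum_univ_two]
        rw [this]
        exact mul_mem (pow_mem hS 2) (zpow_mem hT _)
    · set a := A.1 0 0 with ha
      set c := A.1 1 0 with hcdef
      set q : ℤ := a / c with hq
      set B : SL(2, ℤ) := S * (T ^ (-q) * A) with hB
      have hB10 : B.1 1 0 = a % c := by
        rw [hB, Matrix.SpecialLinearGroup.coe_mul, Matrix.SpecialLinearGroup.coe_mul,
          coe_S, coe_T_zpow]
        simp [Matrix.mul_apply, Fin.sum_univ_two, Matrix.vecMul, dotProduct, Matrix.vecHead, Matrix.vecTail,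
          Int.emod_def]
        ring
      have hlt : (B.1 1 0).natAbs < n := by
        have h2 := Int.natAbs_lt_natAbs_of_nonneg_of_lt (Int.emod_nonneg a hc) (Int.emod_lt a hc)
        rw [Int.natAbs_natCast] at h2
        rw [hB10, ← hn]
        exact h2
      have hBmem := ih _ hlt B rfl
      have : A = T ^ q * (S⁻¹ * B) := by rw [hB]; group
      rw [this]
      exact mul_mem (zpow_mem hT _) (mul_mem (inv_mem hS) hBmem)

private lemma closure_ST : Subgroup.closure ({S, T} : Set SL(2, ℤ)) = ⊤ := by
  rw [eq_top_iff]
  exact fun A _ => gen_aux _ A rfl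

/-! ### The Möbius action on irrational numbers -/

private def num (g : SL(2,ℤ)) (x : ℝ) : ℝ := (g.1 0 0 : ℝ) * x + (g.1 0 1 : ℝ)
private def den (g : SL(2,ℤ)) (x : ℝ) : ℝ := (g.1 1 0 : ℝ) * x + (g.1 1 1 : ℝ)

private lemma det_real (g : SL(2,ℤ)) :
    (g.1 0 0 : ℝ) * (g.1 1 1 : ℝ) - (g.1 0 1 : ℝ) * (g.1 1 0 : ℝ) = 1 := by
  have := g.2
  rw [Matrix.det_fin_two] at this
  exact_mod_cast congrArg (fun z : ℤ => (z : ℝ)) this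

private lemma den_ne_zero (g : SL(2,ℤ)) {x : ℝ} (hx : Irrational x) : den g x ≠ 0 := by
  rcases eq_or_ne (g.1 1 0) 0 with hc | hc
  · have hdet := det_real g
    rw [den, hc]
    push_cast
    intro h
    rw [hc] at hdet
    push_cast at hdet
    simp_all
  · intro h
    have hcr : (g.1 1 0 : ℝ) ≠ 0 := Int.cast_ne_zero.mpr hc
    have : x = ((-(g.1 1 1 : ℚ) / (g.1 1 0 : ℚ) : ℚ) : ℝ) := by
      rw [den] at h
      push_cast
      field_simp
      linarith
    exact hx ⟨_, this.symm⟩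

private def moeb (g : SL(2,ℤ)) (x : ℝ) : ℝ := num g x / den g x

private lemma moeb_irrational (g : SL(2,ℤ)) {x : ℝ} (hx : Irrational x) :
    Irrational (moeb g x) := by
  rw [Irrational]
  rintro ⟨q, hq⟩
  have hd := den_ne_zero g hx
  have hnum : num g x = (q : ℝ) * den g x := by
    rw [moeb] at hq
    field_simp at hq
    linarith [hq]
  have hdet := det_real g
  set a := (g.1 0 0 : ℝ); set b := (g.1 0 1 : ℝ); set c := (g.1 1 0 : ℝ); set d := (g.1 1 1 : ℝ)
  have hkey : (a - q * c) * x = q * d - b := by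
    rw [num, den] at hnum; ring_nf; ring_nf at hnum; linarith
  rcases eq_or_ne (a - (q:ℝ) * c) 0 with h0 | h0
  · have h1 : (q : ℝ) * d - b = 0 := by rw [← hkey, h0, zero_mul]
    have : a = (q:ℝ) * c := by linarith
    have h2 : (0:ℝ) = 1 := by rw [← hdet, this]; linear_combination (-c) * h1
    norm_num at h2
  · have : x = ((q * d - b) / (a - q * c) : ℝ) := by field_simp at hkey ⊢; linarith
    have hxq : x =
        (((q * (g.1 1 1 : ℚ) - (g.1 0 1 : ℚ)) / ((g.1 0 0 : ℚ) - q * (g.1 1 0 : ℚ)) : ℚ) : ℝ) := by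
      rw [this]; push_cast; ring_nf; rfl
    exact hx ⟨_, hxq.symm⟩

private lemma moeb_mul (g h : SL(2,ℤ)) {x : ℝ} (hx : Irrational x) :
    moeb (g * h) x = moeb g (moeb h x) := by
  have hdh := den_ne_zero h hx
  have hdh' : ((h.1 1 0 : ℤ) : ℝ) * x + ((h.1 1 1 : ℤ) : ℝ) ≠ 0 := hdh
  have hnum : num (g * h) x = num g (moeb h x) * den h x := by
    rw [num, num, moeb, num, den, Matrix.SpecialLinearGroup.coe_mul]
    simp only [Matrix.mul_apply, Fin.sum_univ_two]
    push_cast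
    field_simp [hdh']
    ring
  have hden : den (g * h) x = den g (moeb h x) * den h x := by
    rw [den, den, moeb, num, den, Matrix.SpecialLinearGroup.coe_mul]
    simp only [Matrix.mul_apply, Fin.sum_univ_two]
    push_cast
    field_simp [hdh']
    ring
  rw [moeb, moeb, hnum, hden, mul_div_mul_right _ _ hdh]

private lemma moeb_one {x : ℝ} : moeb 1 x = x := by
  simp [moeb, num, den]

/-! ### The action of `PSL(2,ℤ)` on irrationals -/

private abbrev Irr : Type := {x : ℝ // Irrational x}

private instance : MulAction SL(2,ℤ) Irr where
  smul g x := ⟨moeb g x.1, moeb_irrational g x.2⟩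
  one_smul _ := Subtype.ext moeb_one
  mul_smul g h x := Subtype.ext (moeb_mul g h x.2)

private def ρ : SL(2,ℤ) →* Equiv.Perm Irr := MulAction.toPermHom SL(2,ℤ) Irr

private lemma center_le_ker : center SL(2,ℤ) ≤ ρ.ker := by
  intro A hA
  obtain ⟨r, hr, hscalar⟩ := Matrix.SpecialLinearGroup.mem_center_iff.mp hA
  have hr' : r = 1 ∨ r = -1 := by
    have : r * r = 1 := by rw [← pow_two]; simpa using hr
    rcases Int.mul_eq_one_iff_eq_one_or_neg_one.mp this with ⟨h, _⟩ | ⟨h, _⟩ <;> [left; right] <;>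
      exact h
  have h00 : A.1 0 0 = r := by
    rw [← hscalar, Matrix.scalar_apply, Matrix.diagonal_apply_eq]
  have h01 : A.1 0 1 = 0 := by
    rw [← hscalar, Matrix.scalar_apply, Matrix.diagonal_apply_ne]; decide
  have h10 : A.1 1 0 = 0 := by
    rw [← hscalar, Matrix.scalar_apply, Matrix.diagonal_apply_ne]; decide
  have h11 : A.1 1 1 = r := by
    rw [← hscalar, Matrix.scalar_apply, Matrix.diagonal_apply_eq]
  have hr0 : (r : ℝ) ≠ 0 := by rcases hr' with h | h <;> simp [h]
  rw [MonoidHom.mem_ker]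
  ext x
  show moeb A x.1 = x.1
  rw [moeb, num, den, h00, h01, h10, h11]
  push_cast
  field_simp
  simp [hr0]

private def ρbar : PSL(2,ℤ) →* Equiv.Perm Irr := QuotientGroup.lift _ ρ center_le_ker

private instance : MulAction PSL(2,ℤ) Irr where
  smul g x := ρbar g x
  one_smul x := by show ρbar 1 x = x; simp
  mul_smul g h x := by show ρbar (g*h) x = ρbar g (ρbar h x); simp

private lemma psl_smul (g : SL(2,ℤ)) (x : Irr) :
    ((QuotientGroup.mk g : PSL(2,ℤ)) • x).1 = moeb g x.1 := rfl

/-! ### Homomorphisms from `Multiplicative (ZMod n)` -/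

private def zmodHom (n : ℕ) {G : Type*} [Group G] (g : G) (h : g ^ (n : ℕ) = 1) :
    Multiplicative (ZMod n) →* G :=
  AddMonoidHom.toMultiplicativeLeft (ZMod.lift n ⟨(zmultiplesHom (Additive G)) (Additive.ofMul g),
    by simpa [← ofMul_zpow] using congrArg Additive.ofMul (by exact_mod_cast h : g ^ (n : ℤ) = 1)⟩)

private lemma zmodHom_apply_one (n : ℕ) {G : Type*} [Group G] (g : G) (h : g ^ (n : ℕ) = 1) :
    zmodHom n g h (Multiplicative.ofAdd (1 : ZMod n)) = g := by
  have h1 : ((1 : ℤ) : ZMod n) = (1 : ZMod n) := by push_cast; rfl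
  simp only [zmodHom, AddMonoidHom.coe_toMultiplicativeLeft, Function.comp_apply, toAdd_ofAdd]
  rw [← h1, ZMod.lift_coe]
  simp

/-! ### The center contains `-1`, hence `[S]² = 1` and `[ST]³ = 1` -/

private lemma neg_one_mem_center : (-1 : SL(2,ℤ)) ∈ center SL(2,ℤ) := by
  rw [Matrix.SpecialLinearGroup.mem_center_iff]
  refine ⟨-1, by norm_num, ?_⟩
  rw [Matrix.scalar_apply]
  ext i j
  rcases eq_or_ne i j with rfl | hij
  · simp [Matrix.diagonal_apply_eq]
  · simp [Matrix.diagonal_apply_ne _ hij, Matrix.one_apply_ne hij]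

private lemma mkS_sq : (QuotientGroup.mk S : PSL(2,ℤ)) ^ 2 = 1 := by
  rw [← QuotientGroup.mk_pow, S_sq]
  exact (QuotientGroup.eq_one_iff _).mpr neg_one_mem_center

private lemma mkU_cube : (QuotientGroup.mk (S * T) : PSL(2,ℤ)) ^ 3 = 1 := by
  rw [← QuotientGroup.mk_pow, U_cube]
  exact (QuotientGroup.eq_one_iff _).mpr neg_one_mem_center

private def homS : Multiplicative (ZMod 2) →* PSL(2,ℤ) :=
  zmodHom 2 (QuotientGroup.mk S) mkS_sq

private def homU : Multiplicative (ZMod 3) →* PSL(2,ℤ) :=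
  zmodHom 3 (QuotientGroup.mk (S * T)) mkU_cube

private lemma homS_one : homS (Multiplicative.ofAdd (1 : ZMod 2)) = QuotientGroup.mk S :=
  zmodHom_apply_one 2 _ _

private lemma homU_one : homU (Multiplicative.ofAdd (1 : ZMod 3)) = QuotientGroup.mk (S * T) :=
  zmodHom_apply_one 3 _ _

/-! ### Ping-pong setup -/

private abbrev H : Bool → Type := fun b => Multiplicative (ZMod (cond b 2 3))

private def f : (b : Bool) → H b →* PSL(2,ℤ) := fun b =>
  Bool.rec (motive := fun b => H b →* PSL(2,ℤ)) homU homS b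

private def Xp : Bool → Set Irr := fun b =>
  cond b {x : Irr | 0 < x.1} {x : Irr | x.1 < 0}

private lemma moeb_S {x : ℝ} (hx : x ≠ 0) : moeb S x = -1 / x := by
  rw [moeb, num, den, coe_S]
  norm_num

private lemma moeb_U {x : ℝ} : moeb (S * T) x = -1 / (x + 1) := by
  rw [moeb, num, den, coe_U]
  norm_num

private lemma moeb_U_sq {x : ℝ} : moeb ((S * T) ^ 2) x = (-x - 1) / x := by
  rw [moeb, num, den, coe_U_sq]
  norm_num
  ring_nf

private lemma hpp : Pairwise fun i j => ∀ h : H i, h ≠ 1 → f i h • Xp j ⊆ Xp i := by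
  intro i j hij
  cases i <;> cases j <;> try exact absurd rfl hij
  · -- i = false (ZMod 3, sends positives to negatives), j = true
    intro h hne
    have hcases := (show ∀ g : Multiplicative (ZMod 3), g ≠ 1 →
        g = Multiplicative.ofAdd (1 : ZMod 3) ∨ g = Multiplicative.ofAdd (2 : ZMod 3) by
      decide) h hne
    rintro _ ⟨x, hx, rfl⟩
    rcases hcases with rfl | rfl
    · show ((f false (Multiplicative.ofAdd (1 : ZMod 3))) • x).1 < 0
      have : f false (Multiplicative.ofAdd (1 : ZMod 3)) = QuotientGroup.mk (S * T) := homU_one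
      rw [this]
      rw [psl_smul, moeb_U]
      have hx' : (0:ℝ) < x.1 := hx
      apply div_neg_of_neg_of_pos <;> linarith
    · show ((f false (Multiplicative.ofAdd (2 : ZMod 3))) • x).1 < 0
      have h2 : (Multiplicative.ofAdd (2 : ZMod 3)) =
          Multiplicative.ofAdd (1 : ZMod 3) * Multiplicative.ofAdd (1 : ZMod 3) := by decide
      have : f false (Multiplicative.ofAdd (2 : ZMod 3)) = QuotientGroup.mk ((S * T) ^ 2) := by
        show homU (Multiplicative.ofAdd (2 : ZMod 3)) = _
        rw [h2, _root_.map_mul, homU_one, ← QuotientGroup.mk_mul, ← pow_two]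
      rw [this]
      rw [psl_smul, moeb_U_sq]
      have hx' : (0:ℝ) < x.1 := hx
      apply div_neg_of_neg_of_pos <;> linarith
  · -- i = true (ZMod 2, S sends negatives to positives), j = false
    intro h hne
    have hcase := (show ∀ g : Multiplicative (ZMod 2), g ≠ 1 →
        g = Multiplicative.ofAdd (1 : ZMod 2) by decide) h hne
    subst hcase
    rintro _ ⟨x, hx, rfl⟩
    show (0:ℝ) < ((f true (Multiplicative.ofAdd (1 : ZMod 2))) • x).1
    have : f true (Multiplicative.ofAdd (1 : ZMod 2)) = QuotientGroup.mk S := homS_one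
    rw [this]
    have hx' : x.1 < 0 := hx
    rw [psl_smul, moeb_S (by linarith)]
    apply div_pos_of_neg_of_neg <;> linarith

private lemma liftf_injective : Function.Injective (Monoid.CoprodI.lift f) := by
  apply Monoid.CoprodI.lift_injective_of_ping_pong f
    (Or.inr ⟨false, by
      have h3 : H false = Multiplicative (ZMod 3) := rfl
      rw [h3, Cardinal.mk_fintype]
      norm_num⟩) Xp
  · intro i
    cases i
    · exact ⟨⟨-Real.sqrt 2, irrational_sqrt_two.neg⟩, by
        show -Real.sqrt 2 < 0
        have := Real.sqrt_pos.mpr (by norm_num : (0:ℝ) < 2)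
        linarith⟩
    · exact ⟨⟨Real.sqrt 2, irrational_sqrt_two⟩, Real.sqrt_pos.mpr (by norm_num : (0:ℝ) < 2)⟩
  · intro i j hij
    cases i <;> cases j <;> try exact absurd rfl hij
    · exact Set.disjoint_left.mpr fun x (hx : x.1 < 0) (hx' : 0 < x.1) => by linarith
    · exact Set.disjoint_left.mpr fun x (hx : 0 < x.1) (hx' : x.1 < 0) => by linarith
  · exact hpp

/-! ### Relating `Coprod` and `CoprodI` -/

private def ψ : Monoid.Coprod (Multiplicative (ZMod 2)) (Multiplicative (ZMod 3)) →*
    Monoid.CoprodI H :=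
  Monoid.Coprod.lift (Monoid.CoprodI.of (M := H) (i := true))
    (Monoid.CoprodI.of (M := H) (i := false))

private def fχ : (b : Bool) → H b →*
    Monoid.Coprod (Multiplicative (ZMod 2)) (Multiplicative (ZMod 3)) := fun b =>
  Bool.rec (motive := fun b => H b →*
      Monoid.Coprod (Multiplicative (ZMod 2)) (Multiplicative (ZMod 3)))
    Monoid.Coprod.inr Monoid.Coprod.inl b

private def χ : Monoid.CoprodI H →*
    Monoid.Coprod (Multiplicative (ZMod 2)) (Multiplicative (ZMod 3)) :=
  Monoid.CoprodI.lift fχ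

private lemma chi_psi : ∀ a, χ (ψ a) = a := by
  have : χ.comp ψ = MonoidHom.id _ := by
    apply Monoid.Coprod.hom_ext
    · refine MonoidHom.ext fun x => ?_
      show χ (ψ (Monoid.Coprod.inl x)) = Monoid.Coprod.inl x
      rw [ψ, Monoid.Coprod.lift_apply_inl, χ]
      exact Monoid.CoprodI.lift_of (M := H) (i := true) fχ x
    · refine MonoidHom.ext fun x => ?_
      show χ (ψ (Monoid.Coprod.inr x)) = Monoid.Coprod.inr x
      rw [ψ, Monoid.Coprod.lift_apply_inr, χ]
      exact Monoid.CoprodI.lift_of (M := H) (i := false) fχ x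
  exact fun a => DFunLike.congr_fun this a

private def φ0 : Monoid.Coprod (Multiplicative (ZMod 2)) (Multiplicative (ZMod 3)) →*
    PSL(2,ℤ) :=
  Monoid.Coprod.lift homS homU

private lemma phi0_eq : ∀ a, φ0 a = Monoid.CoprodI.lift f (ψ a) := by
  have : (Monoid.CoprodI.lift f).comp ψ = φ0 := by
    apply Monoid.Coprod.hom_ext
    · refine MonoidHom.ext fun x => ?_
      show Monoid.CoprodI.lift f (ψ (Monoid.Coprod.inl x)) = φ0 (Monoid.Coprod.inl x)
      rw [ψ, Monoid.Coprod.lift_apply_inl, φ0, Monoid.Coprod.lift_apply_inl]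
      exact Monoid.CoprodI.lift_of (M := H) (i := true) f x
    · refine MonoidHom.ext fun x => ?_
      show Monoid.CoprodI.lift f (ψ (Monoid.Coprod.inr x)) = φ0 (Monoid.Coprod.inr x)
      rw [ψ, Monoid.Coprod.lift_apply_inr, φ0, Monoid.Coprod.lift_apply_inr]
      exact Monoid.CoprodI.lift_of (M := H) (i := false) f x
  exact fun a => (DFunLike.congr_fun this a).symm

private lemma phi0_injective : Function.Injective φ0 := by
  have : Function.Injective fun a => Monoid.CoprodI.lift f (ψ a) :=
    liftf_injective.comp (Function.LeftInverse.injective chi_psi)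
  intro a b hab
  apply this
  simpa only [← phi0_eq] using hab

private lemma phi0_surjective : Function.Surjective φ0 := by
  have hSmem : (QuotientGroup.mk S : PSL(2,ℤ)) ∈ φ0.range :=
    ⟨Monoid.Coprod.inl (Multiplicative.ofAdd (1 : ZMod 2)), by
      rw [φ0, Monoid.Coprod.lift_apply_inl, homS_one]⟩
  have hUmem : (QuotientGroup.mk (S * T) : PSL(2,ℤ)) ∈ φ0.range :=
    ⟨Monoid.Coprod.inr (Multiplicative.ofAdd (1 : ZMod 3)), by
      rw [φ0, Monoid.Coprod.lift_apply_inr, homU_one]⟩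
  have hTmem : (QuotientGroup.mk T : PSL(2,ℤ)) ∈ φ0.range := by
    have : (QuotientGroup.mk T : PSL(2,ℤ)) =
        (QuotientGroup.mk S : PSL(2,ℤ))⁻¹ * QuotientGroup.mk (S * T) := by
      rw [← QuotientGroup.mk_inv, ← QuotientGroup.mk_mul, inv_mul_cancel_left]
    rw [this]
    exact mul_mem (inv_mem hSmem) hUmem
  intro x
  obtain ⟨g, rfl⟩ := QuotientGroup.mk_surjective x
  have hg : g ∈ Subgroup.closure ({S, T} : Set SL(2,ℤ)) := closure_ST ▸ mem_top g
  refine closure_induction (p := fun g _ => (QuotientGroup.mk g : PSL(2,ℤ)) ∈ φ0.range)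
    ?_ ?_ ?_ ?_ hg
  · rintro x (rfl | rfl)
    · exact hSmem
    · exact hTmem
  · exact one_mem _
  · intro x y _ _ hx hy
    rw [QuotientGroup.mk_mul]
    exact mul_mem hx hy
  · intro x _ hx
    rw [QuotientGroup.mk_inv]
    exact inv_mem hx

end Stmt4
end

open Stmt4 in
/-- The free product `ℤ/2ℤ * ℤ/3ℤ` is isomorphic to `PSL₂(ℤ)`, via an
isomorphism sending the order-2 generator to the class of `S = [[0,-1],[1,0]]` and the
order-3 generator to the class of `S*T`, where `T = [[1,1],[0,1]]`. -/
theorem stmt4 :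
    ∃ φ : Monoid.Coprod (Multiplicative (ZMod 2)) (Multiplicative (ZMod 3)) ≃*
        Matrix.ProjectiveSpecialLinearGroup (Fin 2) ℤ,
      φ (Monoid.Coprod.inl (Multiplicative.ofAdd (1 : ZMod 2))) =
        (QuotientGroup.mk ModularGroup.S : Matrix.ProjectiveSpecialLinearGroup (Fin 2) ℤ) ∧
      φ (Monoid.Coprod.inr (Multiplicative.ofAdd (1 : ZMod 3))) =
        (QuotientGroup.mk (ModularGroup.S * ModularGroup.T) :
          Matrix.ProjectiveSpecialLinearGroup (Fin 2) ℤ) := by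
  refine ⟨MulEquiv.ofBijective φ0 ⟨phi0_injective, phi0_surjective⟩, ?_, ?_⟩
  · show φ0 (Monoid.Coprod.inl (Multiplicative.ofAdd (1 : ZMod 2))) = _
    rw [φ0, Monoid.Coprod.lift_apply_inl, homS_one]
  · show φ0 (Monoid.Coprod.inr (Multiplicative.ofAdd (1 : ZMod 3))) = _
    rw [φ0, Monoid.Coprod.lift_apply_inr, homU_one]
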